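/- arXiv:1907.05420 — 2 statements merged into one kernel-verified Lean document; each statement's English description precedes it below -/
import Mathlib

section
/- Let H be a symmetric n × n real matrix and J an m × n real matrix of full row rank m. Then the symmetric saddle-point matrix K = [[H, Jᵀ], [J, 0]] of size (n + m) has inertia (n, m, 0) — that is, exactly n positive eigenvalues, m negative eigenvalues, and no zero eigenvalues — if and only if H is positive definite on the null space of J, i.e., dᵀ H d > 0 for every nonzero d ∈ ℝ^n with J d = 0. -/
open Matrix

set_option linter.unusedSectionVars false
set_option linter.unusedVariables false
set_option maxHeartbeats 1600000

open Module Metric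

section Aux
variable {ι : Type*} [Fintype ι] [DecidableEq ι]


lemma my_sum_dotProduct {σ : Type*} (s : Finset σ) (f : σ → ι → ℝ) (w : ι → ℝ) :
    (∑ i ∈ s, f i) ⬝ᵥ w = ∑ i ∈ s, f i ⬝ᵥ w := by
  induction s using Finset.cons_induction with
  | empty => simp [zero_dotProduct]
  | cons a s ha ih => simp [add_dotProduct, ih]

lemma my_dotProduct_sum {σ : Type*} (s : Finset σ) (w : ι → ℝ) (f : σ → ι → ℝ) :
    w ⬝ᵥ (∑ i ∈ s, f i) = ∑ i ∈ s, w ⬝ᵥ f i := by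
  induction s using Finset.cons_induction with
  | empty => simp [dotProduct_zero]
  | cons a s ha ih => simp [dotProduct_add, ih]

lemma my_mulVec_sum {σ : Type*} (s : Finset σ) (A : Matrix ι ι ℝ) (f : σ → ι → ℝ) :
    A *ᵥ (∑ i ∈ s, f i) = ∑ i ∈ s, A *ᵥ f i := by
  induction s using Finset.cons_induction with
  | empty => simp [mulVec_zero]
  | cons a s ha ih => simp [mulVec_add, ih]

/-- eigenvectors as plain functions -/
noncomputable def evec {A : Matrix ι ι ℝ} (hA : A.IsHermitian) (i : ι) : ι → ℝ :=
  (WithLp.equiv 2 _) (hA.eigenvectorBasis i)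

lemma evec_mulVec {A : Matrix ι ι ℝ} (hA : A.IsHermitian) (i : ι) :
    A *ᵥ evec hA i = hA.eigenvalues i • evec hA i := hA.mulVec_eigenvectorBasis i

lemma evec_dot {A : Matrix ι ι ℝ} (hA : A.IsHermitian) (i j : ι) :
    evec hA i ⬝ᵥ evec hA j = if i = j then 1 else 0 := by
  have := (orthonormal_iff_ite.mp hA.eigenvectorBasis.orthonormal) i j
  simpa [PiLp.inner_apply, RCLike.inner_apply, dotProduct, evec, mul_comm] using this

lemma evec_li {A : Matrix ι ι ℝ} (hA : A.IsHermitian) :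
    LinearIndependent ℝ (evec hA) := by
  have h := hA.eigenvectorBasis.orthonormal.linearIndependent
  exact h.map' (WithLp.linearEquiv 2 ℝ (ι → ℝ)).toLinearMap
    (WithLp.linearEquiv 2 ℝ (ι → ℝ)).ker

lemma span_dot {A : Matrix ι ι ℝ} (hA : A.IsHermitian) {σ : Type*} [Fintype σ] [DecidableEq σ]
    (f : σ → ι) (hf : Function.Injective f) (c : σ → ℝ) :
    (∑ i, c i • evec hA (f i)) ⬝ᵥ A *ᵥ (∑ i, c i • evec hA (f i))
      = ∑ i, hA.eigenvalues (f i) * c i ^ 2 := by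
  have hmv : A *ᵥ (∑ i, c i • evec hA (f i)) = ∑ i, (c i * hA.eigenvalues (f i)) • evec hA (f i) := by
    rw [my_mulVec_sum]
    refine Finset.sum_congr rfl fun i _ => ?_
    rw [mulVec_smul, evec_mulVec, smul_smul]
  rw [hmv, my_sum_dotProduct]
  rw [Finset.sum_congr rfl (fun i _ => my_dotProduct_sum Finset.univ _ _)]
  simp only [smul_dotProduct, dotProduct_smul, evec_dot, hf.eq_iff, smul_eq_mul]
  rw [Finset.sum_congr rfl (fun i _ => Finset.sum_eq_single i (fun j _ hj => by
    simp [if_neg (Ne.symm hj)]) (by simp))]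
  refine Finset.sum_congr rfl fun i _ => ?_
  simp; ring

/-- trivial intersection dimension bound -/
lemma finrank_add_le_of_posneg (A : Matrix ι ι ℝ) (W₁ W₂ : Submodule ℝ (ι → ℝ))
    (h₁ : ∀ x ∈ W₁, x ≠ 0 → 0 < x ⬝ᵥ A *ᵥ x) (h₂ : ∀ x ∈ W₂, x ⬝ᵥ A *ᵥ x ≤ 0) :
    finrank ℝ W₁ + finrank ℝ W₂ ≤ Fintype.card ι := by
  have hinf : W₁ ⊓ W₂ = ⊥ := by
    rw [Submodule.eq_bot_iff]
    rintro x ⟨hx1, hx2⟩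
    by_contra hx
    exact absurd (h₂ x hx2) (not_le.mpr (h₁ x hx1 hx))
  have h := Submodule.finrank_sup_add_finrank_inf_eq W₁ W₂
  rw [hinf, finrank_bot, add_zero] at h
  rw [← h]
  calc finrank ℝ ↥(W₁ ⊔ W₂) ≤ finrank ℝ (ι → ℝ) := Submodule.finrank_le _
    _ = Fintype.card ι := Module.finrank_pi ℝ

variable {A : Matrix ι ι ℝ}

noncomputable def eigSpan (hA : A.IsHermitian) (p : ι → Prop) [DecidablePred p] :
    Submodule ℝ (ι → ℝ) :=
  Submodule.span ℝ (Set.range fun i : {i // p i} => evec hA i)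

lemma finrank_eigSpan (hA : A.IsHermitian) (p : ι → Prop) [DecidablePred p] :
    finrank ℝ (eigSpan hA p) = Fintype.card {i // p i} :=
  finrank_span_eq_card ((evec_li hA).comp Subtype.val Subtype.val_injective)

lemma eigSpan_repr (hA : A.IsHermitian) {p : ι → Prop} [DecidablePred p] {x : ι → ℝ}
    (hx : x ∈ eigSpan hA p) :
    ∃ c : {i // p i} → ℝ, x ⬝ᵥ A *ᵥ x = ∑ i : {i // p i}, hA.eigenvalues i * c i ^ 2 ∧
      (x ≠ 0 → ∃ i, c i ≠ 0) := by
  obtain ⟨c, hc⟩ := Submodule.mem_span_range_iff_exists_fun ℝ |>.mp hx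
  refine ⟨c, ?_, ?_⟩
  · rw [← hc]
    exact span_dot hA Subtype.val Subtype.val_injective c
  · intro hx0
    by_contra h
    push_neg at h
    apply hx0
    rw [← hc]
    simp [h]

/-- a subspace on which the form is positive has dim at most the number of positive eigenvalues -/
lemma finrank_le_card_pos (hA : A.IsHermitian) (W : Submodule ℝ (ι → ℝ))
    (hW : ∀ x ∈ W, x ≠ 0 → 0 < x ⬝ᵥ A *ᵥ x) :
    finrank ℝ W ≤ Fintype.card {i // 0 < hA.eigenvalues i} := by
  have hT := finrank_add_le_of_posneg A W (eigSpan hA (fun i => ¬ 0 < hA.eigenvalues i)) hW ?_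
  · rw [finrank_eigSpan, Fintype.card_subtype_compl] at hT
    have hle := Fintype.card_subtype_le (fun i => 0 < hA.eigenvalues i)
    omega
  · intro x hx
    obtain ⟨c, hq, -⟩ := eigSpan_repr hA hx
    rw [hq]
    refine Finset.sum_nonpos fun i _ => ?_
    have h1 : hA.eigenvalues i ≤ 0 := le_of_not_gt i.2
    have := mul_le_mul_of_nonneg_right h1 (sq_nonneg (c i))
    simpa using this

/-- a subspace on which the form is negative has dim at most the number of negative eigenvalues -/
lemma finrank_le_card_neg (hA : A.IsHermitian) (W : Submodule ℝ (ι → ℝ))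
    (hW : ∀ x ∈ W, x ≠ 0 → x ⬝ᵥ A *ᵥ x < 0) :
    finrank ℝ W ≤ Fintype.card {i // hA.eigenvalues i < 0} := by
  have hT := finrank_add_le_of_posneg (-A) W (eigSpan hA (fun i => ¬ hA.eigenvalues i < 0)) ?_ ?_
  · rw [finrank_eigSpan, Fintype.card_subtype_compl] at hT
    have hle := Fintype.card_subtype_le (fun i => hA.eigenvalues i < 0)
    omega
  · intro x hx hx0
    have := hW x hx hx0
    rw [neg_mulVec, dotProduct_neg]
    linarith
  · intro x hx
    obtain ⟨c, hq, -⟩ := eigSpan_repr hA hx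
    rw [neg_mulVec, dotProduct_neg, hq]
    simp only [neg_nonpos]
    refine Finset.sum_nonneg fun i _ => ?_
    have h1 : 0 ≤ hA.eigenvalues i := le_of_not_gt i.2
    positivity

/-- the form is positive on the span of eigenvectors with positive eigenvalues -/
lemma eigSpan_pos (hA : A.IsHermitian) {x : ι → ℝ}
    (hx : x ∈ eigSpan hA (fun i => 0 < hA.eigenvalues i)) (hx0 : x ≠ 0) :
    0 < x ⬝ᵥ A *ᵥ x := by
  obtain ⟨c, hq, hc⟩ := eigSpan_repr hA hx
  obtain ⟨i0, hi0⟩ := hc hx0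
  rw [hq]
  refine Finset.sum_pos' (fun i _ => ?_) ⟨i0, Finset.mem_univ _, ?_⟩
  · have : (0:ℝ) < hA.eigenvalues i := i.2
    positivity
  · have : (0:ℝ) < hA.eigenvalues i0 := i0.2
    have : (0:ℝ) < c i0 ^ 2 := by positivity
    nlinarith [i0.2]


lemma card_split {ι : Type*} [Fintype ι] [DecidableEq ι] (f : ι → ℝ) :
    Fintype.card {i // 0 < f i} + Fintype.card {i // f i < 0} + Fintype.card {i // f i = 0}
      = Fintype.card ι := by
  have h1 : ∀ i, (¬ 0 < f i) ↔ (f i < 0 ∨ f i = 0) := by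
    intro i
    constructor
    · intro h
      rcases lt_or_eq_of_le (not_lt.mp h) with h' | h'
      · exact Or.inl h'
      · exact Or.inr h'
    · rintro (h | h) <;> simp [h, not_lt, le_of_lt]
  simp only [Fintype.card_subtype]
  have h2 := Finset.card_filter_add_card_filter_not (s := Finset.univ)
    (p := fun i => 0 < f i)
  have h3 : Finset.filter (fun i => ¬ 0 < f i) Finset.univ
      = Finset.filter (fun i => f i < 0) Finset.univ ∪ Finset.filter (fun i => f i = 0) Finset.univ := by
    rw [← Finset.filter_or]
    exact Finset.filter_congr fun i _ => by rw [h1]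
  have h4 : (Finset.filter (fun i => f i < 0) Finset.univ ∪ Finset.filter (fun i => f i = 0) Finset.univ).card
      = (Finset.filter (fun i => f i < 0) Finset.univ).card + (Finset.filter (fun i => f i = 0) Finset.univ).card := by
    apply Finset.card_union_of_disjoint
    rw [Finset.disjoint_filter]
    intro i _ h hi
    rw [hi] at h
    exact lt_irrefl 0 h
  rw [h3, h4, Finset.card_univ] at h2
  omega

/-- homogeneity of the quadratic form -/

lemma quad_smul {k : ℕ} (H : Matrix (Fin k) (Fin k) ℝ) (t : ℝ) (d : Fin k → ℝ) :
    (t • d) ⬝ᵥ H *ᵥ (t • d) = t ^ 2 * (d ⬝ᵥ H *ᵥ d) := by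
  rw [mulVec_smul, smul_dotProduct, dotProduct_smul]
  simp [smul_eq_mul]; ring

lemma quad_continuous {k : ℕ} (H : Matrix (Fin k) (Fin k) ℝ) :
    Continuous fun d : Fin k → ℝ => d ⬝ᵥ H *ᵥ d := by
  unfold dotProduct mulVec
  exact continuous_finset_sum _ fun i _ => (continuous_apply i).mul
    (continuous_finset_sum _ fun j _ => continuous_const.mul (continuous_apply j))

/-- reduce a positivity statement to the unit sphere by 2-homogeneity -/
lemma sphere_scale {k : ℕ} (f g : (Fin k → ℝ) → ℝ)
    (hf : ∀ t d, f (t • d) = t ^ 2 * f d) (hg : ∀ t d, g (t • d) = t ^ 2 * g d)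
    (h : ∀ u ∈ sphere (0 : Fin k → ℝ) 1, 0 < f u + g u) :
    ∀ d : Fin k → ℝ, d ≠ 0 → 0 < f d + g d := by
  intro d hd
  have hnd : ‖d‖ ≠ 0 := norm_ne_zero_iff.mpr hd
  set u := ‖d‖⁻¹ • d with hu
  have hus : u ∈ sphere (0 : Fin k → ℝ) 1 := by
    simp [hu, norm_smul, inv_mul_cancel₀ hnd]
  have hdu : d = ‖d‖ • u := by
    rw [hu, smul_smul, mul_inv_cancel₀ hnd, one_smul]
  have hfu := h u hus
  have hpos : (0:ℝ) < ‖d‖ ^ 2 := by positivity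
  have h1 : f (‖d‖ • u) = ‖d‖ ^ 2 * f u := hf _ _
  have h2 : g (‖d‖ • u) = ‖d‖ ^ 2 * g u := hg _ _
  rw [← hdu] at h1 h2
  have heq : f d + g d = ‖d‖ ^ 2 * (f u + g u) := by rw [h1, h2]; ring
  rw [heq]
  exact mul_pos hpos hfu

lemma exists_rho₁ {k l : ℕ} (H : Matrix (Fin k) (Fin k) ℝ) (J : Matrix (Fin l) (Fin k) ℝ)
    (hpos : ∀ d : Fin k → ℝ, d ≠ 0 → J *ᵥ d = 0 → 0 < d ⬝ᵥ H *ᵥ d) :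
    ∃ ρ : ℝ, 0 < ρ ∧ ∀ d : Fin k → ℝ, d ≠ 0 →
      0 < d ⬝ᵥ H *ᵥ d + ρ * ((J *ᵥ d) ⬝ᵥ (J *ᵥ d)) := by
  set f : (Fin k → ℝ) → ℝ := fun d => d ⬝ᵥ H *ᵥ d with hfdef
  set g : (Fin k → ℝ) → ℝ := fun d => (J *ᵥ d) ⬝ᵥ (J *ᵥ d) with hgdef
  have hfc : Continuous f := quad_continuous H
  have hgc : Continuous g := by
    have : g = fun d => d ⬝ᵥ (Jᵀ * J) *ᵥ d := by
      funext d
      simp only [hgdef, ← mulVec_mulVec, dotProduct_mulVec, vecMul_transpose]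
    rw [this]; exact quad_continuous _
  have hg0 : ∀ d, 0 ≤ g d := fun d => Finset.sum_nonneg fun i _ => mul_self_nonneg _
  have hgker : ∀ d, g d = 0 → J *ᵥ d = 0 := by
    intro d h
    funext i
    have := (Finset.sum_eq_zero_iff_of_nonneg (fun j _ => mul_self_nonneg ((J *ᵥ d) j))).mp h i
      (Finset.mem_univ i)
    simpa [mul_self_eq_zero] using this
  have hfs : ∀ t d, f (t • d) = t ^ 2 * f d := fun t d => quad_smul H t d
  have hgs : ∀ t d, g (t • d) = t ^ 2 * g d := by
    intro t d
    simp only [hgdef, mulVec_smul, smul_dotProduct, dotProduct_smul, smul_eq_mul]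
    ring
  -- find ρ working on the sphere
  have key : ∃ ρ : ℝ, 0 < ρ ∧ ∀ u ∈ sphere (0 : Fin k → ℝ) 1, 0 < f u + ρ * g u := by
    set T : Set (Fin k → ℝ) := sphere 0 1 ∩ {d | f d ≤ 0} with hT
    rcases T.eq_empty_or_nonempty with hTe | hTne
    · refine ⟨1, one_pos, fun u hu => ?_⟩
      have hfu : 0 < f u := by
        by_contra hc
        exact Set.eq_empty_iff_forall_notMem.mp hTe u ⟨hu, not_lt.mp hc⟩
      have := hg0 u
      linarith
    · have hTc : IsCompact T := (isCompact_sphere _ _).inter_right (isClosed_le hfc continuous_const)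
      obtain ⟨d₀, hd₀T, hd₀min⟩ := hTc.exists_isMinOn hTne hgc.continuousOn
      have hd₀ne : d₀ ≠ 0 := by
        intro h
        have : ‖d₀‖ = 1 := mem_sphere_zero_iff_norm.mp hd₀T.1
        rw [h] at this; simp at this
      have hε : 0 < g d₀ := by
        rcases (hg0 d₀).lt_or_eq with h | h
        · exact h
        · exact absurd (hpos d₀ hd₀ne (hgker d₀ h.symm)) (not_lt.mpr hd₀T.2)
      obtain ⟨dm, hdmS, hdmmin⟩ := (isCompact_sphere (0 : Fin k → ℝ) 1).exists_isMinOn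
        ⟨d₀, hd₀T.1⟩ hfc.continuousOn
      set ρ := (|f dm| + 1) / g d₀ with hρ
      have hρpos : 0 < ρ := by positivity
      refine ⟨ρ, hρpos, fun u hu => ?_⟩
      rcases lt_or_ge 0 (f u) with h | h
      · have := mul_nonneg hρpos.le (hg0 u)
        linarith
      · have huT : u ∈ T := ⟨hu, h⟩
        have h1 : g d₀ ≤ g u := hd₀min huT
        have h2 : f dm ≤ f u := hdmmin hu
        have h3 : ρ * g d₀ ≤ ρ * g u := mul_le_mul_of_nonneg_left h1 hρpos.le
        have h4 : ρ * g d₀ = |f dm| + 1 := by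
          rw [hρ]; field_simp
        have h5 : f dm ≥ -|f dm| := neg_abs_le _
        linarith
  obtain ⟨ρ, hρpos, hρ⟩ := key
  refine ⟨ρ, hρpos, ?_⟩
  exact sphere_scale f (fun d => ρ * g d) hfs
    (fun t d => by show ρ * g (t • d) = t ^ 2 * (ρ * g d); rw [hgs]; ring) hρ


lemma exists_rho₂ {k l : ℕ} (H : Matrix (Fin k) (Fin k) ℝ) (B : Matrix (Fin k) (Fin l) ℝ)
    (hB : ∀ y : Fin l → ℝ, y ≠ 0 → B *ᵥ y ≠ 0) :
    ∃ ρ : ℝ, 0 < ρ ∧ ∀ y : Fin l → ℝ, y ≠ 0 →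
      ρ * ((B *ᵥ y) ⬝ᵥ H *ᵥ (B *ᵥ y)) < 2 * ((B *ᵥ y) ⬝ᵥ (B *ᵥ y)) := by
  by_cases hex : ∃ y : Fin l → ℝ, y ≠ 0
  swap
  · push_neg at hex
    exact ⟨1, one_pos, fun y hy => absurd (hex y) hy⟩
  obtain ⟨y₀, hy₀⟩ := hex
  set f : (Fin l → ℝ) → ℝ := fun y => (B *ᵥ y) ⬝ᵥ H *ᵥ (B *ᵥ y) with hfdef
  set g : (Fin l → ℝ) → ℝ := fun y => (B *ᵥ y) ⬝ᵥ (B *ᵥ y) with hgdef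
  have hfc : Continuous f := by
    have : f = fun y => y ⬝ᵥ (Bᵀ * H * B) *ᵥ y := by
      funext y
      simp only [hfdef, ← mulVec_mulVec, dotProduct_mulVec, vecMul_transpose]
    rw [this]; exact quad_continuous _
  have hgc : Continuous g := by
    have : g = fun y => y ⬝ᵥ (Bᵀ * B) *ᵥ y := by
      funext y
      simp only [hgdef, ← mulVec_mulVec, dotProduct_mulVec, vecMul_transpose]
    rw [this]; exact quad_continuous _
  have hg0 : ∀ y, 0 ≤ g y := fun y => Finset.sum_nonneg fun i _ => mul_self_nonneg _
  have hgpos : ∀ y : Fin l → ℝ, y ≠ 0 → 0 < g y := by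
    intro y hy
    rcases (hg0 y).lt_or_eq with h | h
    · exact h
    · exfalso
      apply hB y hy
      funext i
      have := (Finset.sum_eq_zero_iff_of_nonneg
        (fun j _ => mul_self_nonneg ((B *ᵥ y) j))).mp h.symm i (Finset.mem_univ i)
      simpa [mul_self_eq_zero] using this
  have hfs : ∀ (t : ℝ) y, f (t • y) = t ^ 2 * f y := by
    intro t y
    simp only [hfdef, mulVec_smul, smul_dotProduct, dotProduct_smul, smul_eq_mul]
    ring
  have hgs : ∀ (t : ℝ) y, g (t • y) = t ^ 2 * g y := by
    intro t y
    simp only [hgdef, mulVec_smul, smul_dotProduct, dotProduct_smul, smul_eq_mul]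
    ring
  have hny₀ : ‖y₀‖ ≠ 0 := norm_ne_zero_iff.mpr hy₀
  have hSne : (sphere (0 : Fin l → ℝ) 1).Nonempty :=
    ⟨‖y₀‖⁻¹ • y₀, by simp [norm_smul, inv_mul_cancel₀ hny₀]⟩
  obtain ⟨uc, hucS, hucmax⟩ := (isCompact_sphere (0 : Fin l → ℝ) 1).exists_isMaxOn hSne
    hfc.continuousOn
  obtain ⟨ue, hueS, huemin⟩ := (isCompact_sphere (0 : Fin l → ℝ) 1).exists_isMinOn hSne
    hgc.continuousOn
  have hue_ne : ue ≠ 0 := by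
    intro h
    have : ‖ue‖ = 1 := mem_sphere_zero_iff_norm.mp hueS
    rw [h] at this; simp at this
  set ε := g ue with hε
  have hεpos : 0 < ε := hgpos ue hue_ne
  set M := max (f uc) 0 with hM
  have hM0 : 0 ≤ M := le_max_right _ _
  set ρ := ε / (M + 1) with hρ
  have hρpos : 0 < ρ := by positivity
  have hsph : ∀ u ∈ sphere (0 : Fin l → ℝ) 1, ρ * f u < 2 * g u := by
    intro u hu
    have h1 : f u ≤ M := le_trans (hucmax hu) (le_max_left _ _)
    have h2 : ε ≤ g u := huemin hu
    have h3 : ρ * f u ≤ ρ * M := mul_le_mul_of_nonneg_left h1 hρpos.le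
    have h4 : ρ * (M + 1) = ε := by rw [hρ]; field_simp
    nlinarith
  refine ⟨ρ, hρpos, fun y hy => ?_⟩
  have hny : ‖y‖ ≠ 0 := norm_ne_zero_iff.mpr hy
  set u := ‖y‖⁻¹ • y with hu
  have hus : u ∈ sphere (0 : Fin l → ℝ) 1 := by
    simp [hu, norm_smul, inv_mul_cancel₀ hny]
  have hyu : y = ‖y‖ • u := by
    rw [hu, smul_smul, mul_inv_cancel₀ hny, one_smul]
  have h1 : f (‖y‖ • u) = ‖y‖ ^ 2 * f u := hfs _ _
  have h2 : g (‖y‖ • u) = ‖y‖ ^ 2 * g u := hgs _ _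
  rw [← hyu] at h1 h2
  have hpos : (0:ℝ) < ‖y‖ ^ 2 := by positivity
  have := hsph u hus
  calc ρ * f y = ‖y‖ ^ 2 * (ρ * f u) := by rw [h1]; ring
    _ < ‖y‖ ^ 2 * (2 * g u) := by exact mul_lt_mul_of_pos_left this hpos
    _ = 2 * g y := by rw [h2]; ring

end Aux

/-- **Inertia of the symmetric saddle-point KKT matrix.**
Let `H` be a symmetric `n × n` real matrix and `J` an `m × n` matrix of full row
rank `m`. The saddle-point matrix `K = [[H, Jᵀ], [J, 0]]` has inertia `(n, m, 0)`
(exactly `n` positive, `m` negative and no zero eigenvalues, counted with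
multiplicity) iff `H` is positive definite on the null space of `J`, i.e.
`dᵀ H d > 0` for every nonzero `d` with `J d = 0`. -/
theorem saddle_point_inertia {n m : ℕ}
    (H : Matrix (Fin n) (Fin n) ℝ) (J : Matrix (Fin m) (Fin n) ℝ)
    (hH : H.IsHermitian) (hJ : J.rank = m)
    (hK : (Matrix.fromBlocks H Jᵀ J 0).IsHermitian) :
    (Fintype.card {i : Fin n ⊕ Fin m // 0 < hK.eigenvalues i} = n ∧
     Fintype.card {i : Fin n ⊕ Fin m // hK.eigenvalues i < 0} = m ∧
     Fintype.card {i : Fin n ⊕ Fin m // hK.eigenvalues i = 0} = 0)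
    ↔
    (∀ d : Fin n → ℝ, d ≠ 0 → J.mulVec d = 0 → 0 < d ⬝ᵥ H.mulVec d) := by
  set K := Matrix.fromBlocks H Jᵀ J (0 : Matrix (Fin m) (Fin m) ℝ) with hKdef
  -- quadratic form formula
  have qform : ∀ (d : Fin n → ℝ) (y : Fin m → ℝ),
      Sum.elim d y ⬝ᵥ K *ᵥ Sum.elim d y = d ⬝ᵥ H *ᵥ d + 2 * ((J *ᵥ d) ⬝ᵥ y) := by
    intro d y
    rw [hKdef, fromBlocks_mulVec]
    simp only [Sum.elim_comp_inl, Sum.elim_comp_inr]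
    rw [sumElim_dotProduct_sumElim, zero_mulVec, add_zero,
      dotProduct_add, dotProduct_mulVec d Jᵀ y, vecMul_transpose, dotProduct_comm y]
    ring
  have helim0 : ∀ (d : Fin n → ℝ) (y : Fin m → ℝ), d = 0 → y = 0 → Sum.elim d y = 0 := by
    intro d y hd hy
    subst hd; subst hy
    funext i
    cases i <;> simp
  -- injectivity of Jᵀ *ᵥ ·
  have hJT : ∀ y : Fin m → ℝ, Jᵀ *ᵥ y = 0 → y = 0 := by
    have hrankT : finrank ℝ (LinearMap.range Jᵀ.mulVecLin) = m := by
      have : Jᵀ.rank = m := by rw [Matrix.rank_transpose]; exact hJ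
      exact this
    have hrn := LinearMap.finrank_range_add_finrank_ker Jᵀ.mulVecLin
    rw [hrankT, Module.finrank_pi, Fintype.card_fin] at hrn
    have hker0 : finrank ℝ (LinearMap.ker Jᵀ.mulVecLin) = 0 := by omega
    have hker : LinearMap.ker Jᵀ.mulVecLin = ⊥ := Submodule.finrank_eq_zero.mp hker0
    intro y hy
    have : y ∈ LinearMap.ker Jᵀ.mulVecLin := by
      rw [LinearMap.mem_ker, Matrix.mulVecLin_apply]
      exact hy
    rw [hker] at this
    simpa using this
  have hcard : Fintype.card (Fin n ⊕ Fin m) = n + m := by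
    rw [Fintype.card_sum, Fintype.card_fin, Fintype.card_fin]
  constructor
  · -- inertia (n, m, 0) → positive definite on null space
    rintro ⟨h1, -, -⟩
    intro d₀ hd₀ hJd₀
    by_contra hq
    have hq' : d₀ ⬝ᵥ H *ᵥ d₀ ≤ 0 := not_lt.mp hq
    -- the (m+1)-dimensional nonpositive subspace
    set ψ : (ℝ × (Fin m → ℝ)) →ₗ[ℝ] (Fin n ⊕ Fin m → ℝ) :=
      { toFun := fun p => Sum.elim (p.1 • d₀) p.2
        map_add' := by
          intro a b
          funext i
          cases i <;> simp [add_smul]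
        map_smul' := by
          intro c a
          funext i
          cases i <;> simp [smul_smul, mul_assoc] } with hψdef
    have hψinj : Function.Injective ψ := by
      intro a b hab
      have h2 : a.2 = b.2 := by
        funext i
        exact congrFun hab (Sum.inr i)
      have h1' : a.1 • d₀ = b.1 • d₀ := by
        funext i
        exact congrFun hab (Sum.inl i)
      have h1 : a.1 = b.1 := by
        by_contra hne
        have := sub_smul a.1 b.1 d₀ ▸ congrArg (fun v => v - b.1 • d₀) h1'
        have hz : (a.1 - b.1) • d₀ = 0 := by
          rw [sub_smul, h1', sub_self]
        exact hd₀ ((smul_eq_zero.mp hz).resolve_left (sub_ne_zero.mpr hne))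
      exact Prod.ext h1 h2
    have hW₂le : ∀ x ∈ LinearMap.range ψ, x ⬝ᵥ K *ᵥ x ≤ 0 := by
      rintro x ⟨⟨t, y⟩, rfl⟩
      have : ψ (t, y) = Sum.elim (t • d₀) y := rfl
      rw [this, qform, quad_smul, mulVec_smul, hJd₀, smul_zero, zero_dotProduct]
      have : t ^ 2 * (d₀ ⬝ᵥ H *ᵥ d₀) ≤ 0 := mul_nonpos_of_nonneg_of_nonpos (sq_nonneg t) hq'
      linarith
    have hW₁pos : ∀ x ∈ eigSpan hK (fun i => 0 < hK.eigenvalues i), x ≠ 0 → 0 < x ⬝ᵥ K *ᵥ x :=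
      fun x hx hx0 => eigSpan_pos hK hx hx0
    have hT := finrank_add_le_of_posneg K (eigSpan hK (fun i => 0 < hK.eigenvalues i))
      (LinearMap.range ψ) hW₁pos hW₂le
    rw [finrank_eigSpan, h1, LinearMap.finrank_range_of_inj hψinj, hcard] at hT
    have : finrank ℝ (ℝ × (Fin m → ℝ)) = 1 + m := by
      rw [Module.finrank_prod, Module.finrank_self, Module.finrank_pi, Fintype.card_fin]
    rw [this] at hT
    omega
  · -- positive definite on null space → inertia (n, m, 0)
    intro hpos
    -- Step 1: at least n positive eigenvalues
    obtain ⟨ρ₁, hρ₁pos, hρ₁⟩ := exists_rho₁ H J hpos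
    set φ₁ : (Fin n → ℝ) →ₗ[ℝ] (Fin n ⊕ Fin m → ℝ) :=
      { toFun := fun d => Sum.elim d ((ρ₁ / 2) • (J *ᵥ d))
        map_add' := by
          intro a b
          funext i
          cases i <;> simp [mulVec_add, smul_add]
        map_smul' := by
          intro c a
          funext i
          cases i <;> simp [mulVec_smul, smul_smul] <;> ring } with hφ₁def
    have hφ₁inj : Function.Injective φ₁ := by
      intro a b hab
      funext i
      exact congrFun hab (Sum.inl i)
    have hW₁pos : ∀ x ∈ LinearMap.range φ₁, x ≠ 0 → 0 < x ⬝ᵥ K *ᵥ x := by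
      rintro x ⟨d, rfl⟩ hx0
      have hxd : φ₁ d = Sum.elim d ((ρ₁ / 2) • (J *ᵥ d)) := rfl
      have hd0 : d ≠ 0 := by
        intro h
        apply hx0
        rw [hxd, h]
        exact helim0 _ _ rfl (by rw [mulVec_zero, smul_zero])
      rw [hxd, qform, dotProduct_smul]
      have := hρ₁ d hd0
      have hsm : (ρ₁ / 2) • ((J *ᵥ d) ⬝ᵥ (J *ᵥ d)) = (ρ₁ / 2) * ((J *ᵥ d) ⬝ᵥ (J *ᵥ d)) := rfl
      rw [hsm]
      linarith
    have hPn : n ≤ Fintype.card {i : Fin n ⊕ Fin m // 0 < hK.eigenvalues i} := by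
      have := finrank_le_card_pos hK (LinearMap.range φ₁) hW₁pos
      rw [LinearMap.finrank_range_of_inj hφ₁inj, Module.finrank_pi, Fintype.card_fin] at this
      exact this
    -- Step 2: at least m negative eigenvalues
    have hJTne : ∀ y : Fin m → ℝ, y ≠ 0 → Jᵀ *ᵥ y ≠ 0 := fun y hy h => hy (hJT y h)
    obtain ⟨ρ₂, hρ₂pos, hρ₂⟩ := exists_rho₂ H Jᵀ hJTne
    set φ₂ : (Fin m → ℝ) →ₗ[ℝ] (Fin n ⊕ Fin m → ℝ) :=
      { toFun := fun y => Sum.elim ((-ρ₂) • (Jᵀ *ᵥ y)) y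
        map_add' := by
          intro a b
          funext i
          cases i <;> simp [mulVec_add, smul_add]
        map_smul' := by
          intro c a
          funext i
          cases i <;> simp [mulVec_smul, smul_smul] <;> ring } with hφ₂def
    have hφ₂inj : Function.Injective φ₂ := by
      intro a b hab
      funext i
      exact congrFun hab (Sum.inr i)
    have hW₂neg : ∀ x ∈ LinearMap.range φ₂, x ≠ 0 → x ⬝ᵥ K *ᵥ x < 0 := by
      rintro x ⟨y, rfl⟩ hx0
      have hxd : φ₂ y = Sum.elim ((-ρ₂) • (Jᵀ *ᵥ y)) y := rfl
      have hy0 : y ≠ 0 := by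
        intro h
        apply hx0
        rw [hxd, h]
        exact helim0 _ _ (by rw [mulVec_zero, smul_zero]) rfl
      rw [hxd, qform, quad_smul]
      have hmix : (J *ᵥ ((-ρ₂) • (Jᵀ *ᵥ y))) ⬝ᵥ y = (-ρ₂) * ((Jᵀ *ᵥ y) ⬝ᵥ (Jᵀ *ᵥ y)) := by
        rw [mulVec_smul, smul_dotProduct, dotProduct_comm (J *ᵥ (Jᵀ *ᵥ y)) y,
          dotProduct_mulVec y J, ← mulVec_transpose]
        rfl
      rw [hmix]
      have h := hρ₂ y hy0
      nlinarith [h, hρ₂pos]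
    have hNm : m ≤ Fintype.card {i : Fin n ⊕ Fin m // hK.eigenvalues i < 0} := by
      have := finrank_le_card_neg hK (LinearMap.range φ₂) hW₂neg
      rw [LinearMap.finrank_range_of_inj hφ₂inj, Module.finrank_pi, Fintype.card_fin] at this
      exact this
    -- Step 3: no zero eigenvalues (K is nonsingular)
    have hZ0 : Fintype.card {i : Fin n ⊕ Fin m // hK.eigenvalues i = 0} = 0 := by
      have hKinj : Function.Injective K.mulVec := by
        intro a b hab
        have hsub : K *ᵥ (a - b) = 0 := by
          rw [mulVec_sub, hab, sub_self]
        set x := a - b with hx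
        have hxelim : Sum.elim (x ∘ Sum.inl) (x ∘ Sum.inr) = x := Sum.elim_comp_inl_inr x
        set d := x ∘ Sum.inl with hd
        set y := x ∘ Sum.inr with hy
        have hblocks : K *ᵥ Sum.elim d y = Sum.elim (H *ᵥ d + Jᵀ *ᵥ y) (J *ᵥ d + 0 *ᵥ y) := by
          rw [hKdef, fromBlocks_mulVec]
          simp only [Sum.elim_comp_inl, Sum.elim_comp_inr]
        rw [hxelim, hsub] at hblocks
        have hcomp1 : H *ᵥ d + Jᵀ *ᵥ y = 0 := by
          funext i
          exact (congrFun hblocks.symm (Sum.inl i))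
        have hcomp2 : J *ᵥ d = 0 := by
          funext i
          have := congrFun hblocks.symm (Sum.inr i)
          simpa using this
        have hd0 : d = 0 := by
          by_contra hdne
          have hqd := hpos d hdne hcomp2
          have : d ⬝ᵥ H *ᵥ d = 0 := by
            have h0 : d ⬝ᵥ (H *ᵥ d + Jᵀ *ᵥ y) = 0 := by rw [hcomp1, dotProduct_zero]
            rw [dotProduct_add, dotProduct_mulVec d Jᵀ y, vecMul_transpose, hcomp2,
              zero_dotProduct, add_zero] at h0
            exact h0
          linarith
        have hy0 : y = 0 := by
          apply hJT
          rw [hd0, mulVec_zero, zero_add] at hcomp1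
          exact hcomp1
        have : x = 0 := by
          rw [← hxelim, hd0, hy0]
          exact helim0 _ _ rfl rfl
        exact sub_eq_zero.mp this
      have hKunit : IsUnit K := mulVec_injective_iff_isUnit.mp hKinj
      have hdet : K.det ≠ 0 := by
        have := (Matrix.isUnit_iff_isUnit_det K).mp hKunit
        exact this.ne_zero
      have hprod : K.det = ∏ i, hK.eigenvalues i := by
        have := hK.det_eq_prod_eigenvalues
        simpa using this
      rw [hprod] at hdet
      have hne : ∀ i, hK.eigenvalues i ≠ 0 := fun i =>
        Finset.prod_ne_zero_iff.mp hdet i (Finset.mem_univ i)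
      rw [Fintype.card_eq_zero_iff]
      exact ⟨fun i => hne i.1 i.2⟩
    -- combine
    have htot := card_split hK.eigenvalues
    rw [hcard] at htot
    refine ⟨?_, ?_, hZ0⟩ <;> omega
end

section
/- Fix N ≥ 1, block sizes N_S and N_A, matrices C_0, C_1 ∈ ℝ^{N_S × N_A}, invertible N_A × N_A matrices A_1, …, A_N, and for each n ∈ {1, …, N} let B_n ∈ ℝ^{N·N_S × N_A} be the block-row matrix whose block rows of size N_S × N_A are: zero for rows 1, …, n−1; C_1 for row n; and C_0 for rows n+1, …, N. Let S_c = Σ_{n=1}^{N} B_n A_n⁻¹ B_nᵀ, viewed as an N × N array of N_S × N_S blocks. Then for all block indices i > j, the block (S_c)_{i,j} equals Σ_{n=1}^{j−1} C_0 A_n⁻¹ C_0ᵀ + C_0 A_j⁻¹ C_1ᵀ; in particular, for each column j all blocks strictly below the diagonal are identical (they do not depend on the row index i), and by symmetry the same holds for the blocks to the right of the diagonal in each row. Hence S_c is completely determined by its N diagonal blocks and N−1 first-subdiagonal blocks. -/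
open Matrix

/-- **Replicated block structure of the global MPOPF Schur complement.**
With `B_n` the block-row matrices of the MPOPF coupling structure
(`0` before row `n`, `C_1` at row `n`, `C_0` after) and invertible blocks `A_n`,
the global Schur complement `S_c = Σ_n B_n A_n⁻¹ B_nᵀ`, viewed as an `N × N`
array of `N_S × N_S` blocks, satisfies for all block indices `i > j`:
`(S_c)_{i,j} = Σ_{n < j} C_0 A_n⁻¹ C_0ᵀ + C_0 A_j⁻¹ C_1ᵀ`.
In particular, in each column all blocks strictly below the diagonal are
identical (independent of the row index `i`), so `S_c` is determined by its
diagonal and first-subdiagonal blocks. -/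
theorem mpopf_global_schur_subdiagonal {N NS NA : ℕ}
    (C0 C1 : Matrix (Fin NS) (Fin NA) ℝ)
    (A : Fin N → Matrix (Fin NA) (Fin NA) ℝ) (hA : ∀ n, IsUnit (A n).det)
    (B : Fin N → Matrix (Fin N × Fin NS) (Fin NA) ℝ)
    (hB : ∀ (n j : Fin N) (r : Fin NS) (c : Fin NA),
      B n (j, r) c = if j < n then 0 else if j = n then C1 r c else C0 r c) :
    ∀ i j : Fin N, j < i →
      ∀ r c, (∑ n, B n * (A n)⁻¹ * (B n)ᵀ) (i, r) (j, c) =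
        ((∑ n ∈ Finset.Iio j, C0 * (A n)⁻¹ * C0ᵀ) + C0 * (A j)⁻¹ * C1ᵀ) r c := by
  intro i j hji r c
  have key : ∀ n : Fin N, (B n * (A n)⁻¹ * (B n)ᵀ) (i, r) (j, c) =
      if n < j then (C0 * (A n)⁻¹ * C0ᵀ) r c
      else if n = j then (C0 * (A j)⁻¹ * C1ᵀ) r c else 0 := by
    intro n
    rcases lt_trichotomy n j with h | h | h
    · have hi : ¬ i < n := not_lt.mpr (le_of_lt (h.trans hji))
      have hi' : i ≠ n := ne_of_gt (h.trans hji)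
      have hj : ¬ j < n := not_lt.mpr h.le
      have hj' : j ≠ n := ne_of_gt h
      simp [Matrix.mul_apply, Matrix.transpose_apply, hB, hi, hi', hj, hj', h]
    · subst h
      have hi : ¬ i < n := not_lt.mpr hji.le
      have hi' : i ≠ n := ne_of_gt hji
      simp [Matrix.mul_apply, Matrix.transpose_apply, hB, hi, hi', lt_irrefl]
    · have hj : j < n := h
      simp [Matrix.mul_apply, Matrix.transpose_apply, hB, hj, not_lt.mpr h.le, ne_of_lt h, h.ne']
  rw [Matrix.sum_apply]
  simp only [key]
  rw [Matrix.add_apply, Matrix.sum_apply]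
  rw [← Finset.sum_filter_add_sum_filter_not Finset.univ (· < j)]
  congr 1
  · rw [Finset.sum_congr rfl (fun n hn => if_pos (Finset.mem_filter.mp hn).2)]
    apply Finset.sum_congr
    · ext n; simp [Finset.mem_Iio]
    · intros; rfl
  · rw [Finset.sum_congr rfl (fun n hn => if_neg (Finset.mem_filter.mp hn).2)]
    rw [Finset.sum_eq_single_of_mem j (by simp [lt_irrefl]) (fun b _ hb => if_neg hb)]
    simp
end
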